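/- Let μ > 0. The strict operator T: ℝ × ℝ² → ℝ × ℝ² defined by T(xₙ, xₜ) = (max(xₙ, 0), p(μ·max(xₙ, 0), xₜ)), where p(r, x) = x if ‖x‖ ≤ r and p(r, x) = (r/‖x‖)·x otherwise, is Lipschitz continuous; in particular ‖T(x) − T(y)‖ ≤ (1 + μ)·‖x − y‖ for all x, y ∈ ℝ × ℝ² (with the Euclidean norm on ℝ × ℝ² ≅ ℝ³). -/

import Mathlib

open scoped RealInnerProductSpace

local notation "E" => EuclideanSpace ℝ (Fin 2)

private noncomputable def pb (r : ℝ) (x : E) : E := if ‖x‖ ≤ r then x else (r / ‖x‖) • x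

private lemma pb_point_lip (r : ℝ) (hr : 0 ≤ r) (x y : E) :
    ‖pb r x - pb r y‖ ≤ ‖x - y‖ := by
  have key : ∀ u v : E, ‖u‖ ≤ r → ¬ ‖v‖ ≤ r → ‖u - (r / ‖v‖) • v‖ ≤ ‖u - v‖ := by
    intro u v hu hv
    push_neg at hv
    have hvpos : (0:ℝ) < ‖v‖ := lt_of_le_of_lt hr hv
    have cs : (inner ℝ u v : ℝ) ≤ ‖u‖ * ‖v‖ := real_inner_le_norm u v
    have h1 : ‖u - (r / ‖v‖) • v‖ ^ 2 ≤ ‖u - v‖ ^ 2 := by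
      rw [norm_sub_sq_real, norm_sub_sq_real, norm_smul, real_inner_smul_right]
      rw [Real.norm_eq_abs, abs_of_nonneg (div_nonneg hr hvpos.le)]
      have hru : (inner ℝ u v : ℝ) ≤ r * ‖v‖ := le_trans cs (by nlinarith)
      have e : (r / ‖v‖ * ‖v‖) = r := by field_simp
      rw [e]
      set t : ℝ := (inner ℝ u v : ℝ) with ht
      have goal2 : (‖u‖ ^ 2 - 2 * (r / ‖v‖ * t) + r ^ 2) * ‖v‖ ≤
          (‖u‖ ^ 2 - 2 * t + ‖v‖ ^ 2) * ‖v‖ := by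
        have e4 : (‖u‖ ^ 2 - 2 * (r / ‖v‖ * t) + r ^ 2) * ‖v‖ =
            ‖u‖ ^ 2 * ‖v‖ - 2 * t * r + r ^ 2 * ‖v‖ := by field_simp
        rw [e4]
        nlinarith [mul_nonneg (by linarith : (0:ℝ) ≤ r * ‖v‖ - t)
            (by linarith : (0:ℝ) ≤ ‖v‖ - r),
          mul_nonneg hvpos.le (sq_nonneg (‖v‖ - r))]
      exact le_of_mul_le_mul_right goal2 hvpos
    nlinarith [norm_nonneg (u - (r / ‖v‖) • v), norm_nonneg (u - v)]
  unfold pb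
  by_cases hx : ‖x‖ ≤ r <;> by_cases hy : ‖y‖ ≤ r <;> simp only [hx, hy, if_pos, if_neg,
    if_true, if_false]
  · exact le_rfl
  · exact key x y hx hy
  · rw [norm_sub_rev, norm_sub_rev x y]; exact key y x hy hx
  · -- both outside
    push_neg at hx hy
    have hxp : (0:ℝ) < ‖x‖ := lt_of_le_of_lt hr hx
    have hyp : (0:ℝ) < ‖y‖ := lt_of_le_of_lt hr hy
    have cs : (inner ℝ x y : ℝ) ≤ ‖x‖ * ‖y‖ := real_inner_le_norm x y
    have h1 : ‖(r / ‖x‖) • x - (r / ‖y‖) • y‖ ^ 2 ≤ ‖x - y‖ ^ 2 := by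
      rw [norm_sub_sq_real, norm_sub_sq_real, norm_smul, norm_smul,
        real_inner_smul_left, real_inner_smul_right]
      rw [Real.norm_eq_abs, Real.norm_eq_abs, abs_of_nonneg (div_nonneg hr hxp.le),
        abs_of_nonneg (div_nonneg hr hyp.le)]
      have ex : (r / ‖x‖ * ‖x‖) = r := by field_simp
      have ey : (r / ‖y‖ * ‖y‖) = r := by field_simp
      rw [ex, ey]
      have e2 : r / ‖x‖ * (r / ‖y‖ * (inner ℝ x y : ℝ)) = (r * r) * (inner ℝ x y : ℝ) / (‖x‖ * ‖y‖) := by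
        field_simp
      rw [e2]
      set t : ℝ := (inner ℝ x y : ℝ) with ht
      have hxy : (0:ℝ) < ‖x‖ * ‖y‖ := mul_pos hxp hyp
      have hr2 : r ^ 2 ≤ ‖x‖ * ‖y‖ := by nlinarith
      have goal2 : (r ^ 2 - 2 * (r * r * t / (‖x‖ * ‖y‖)) + r ^ 2) * (‖x‖ * ‖y‖) ≤
          (‖x‖ ^ 2 - 2 * t + ‖y‖ ^ 2) * (‖x‖ * ‖y‖) := by
        have e4 : (r ^ 2 - 2 * (r * r * t / (‖x‖ * ‖y‖)) + r ^ 2) * (‖x‖ * ‖y‖) =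
            2 * r ^ 2 * (‖x‖ * ‖y‖) - 2 * r ^ 2 * t := by field_simp; ring
        rw [e4]
        nlinarith [mul_nonneg (by linarith : (0:ℝ) ≤ ‖x‖ * ‖y‖ - t)
            (by linarith : (0:ℝ) ≤ ‖x‖ * ‖y‖ - r ^ 2),
          mul_nonneg hxy.le (sq_nonneg (‖x‖ - ‖y‖))]
      exact le_of_mul_le_mul_right goal2 hxy
    nlinarith [norm_nonneg ((r / ‖x‖) • x - (r / ‖y‖) • y), norm_nonneg (x - y)]

private lemma pb_radius_lip (r s : ℝ) (hr : 0 ≤ r) (hs : 0 ≤ s) (x : E) :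
    ‖pb r x - pb s x‖ ≤ |r - s| := by
  have key : ∀ a b : ℝ, 0 ≤ a → 0 ≤ b → ‖x‖ ≤ a → ¬ ‖x‖ ≤ b →
      ‖pb a x - pb b x‖ ≤ |a - b| := by
    intro a b ha hb hxa hxb
    push_neg at hxb
    have hxp : (0:ℝ) < ‖x‖ := lt_of_le_of_lt hb hxb
    unfold pb
    rw [if_pos hxa, if_neg (not_le.mpr hxb)]
    have : x - (b / ‖x‖) • x = (1 - b / ‖x‖) • x := by
      rw [sub_smul, one_smul]
    rw [this, norm_smul, Real.norm_eq_abs]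
    have h1 : 0 ≤ 1 - b / ‖x‖ := by
      rw [sub_nonneg, div_le_one hxp]; exact hxb.le
    rw [abs_of_nonneg h1]
    have : (1 - b / ‖x‖) * ‖x‖ = ‖x‖ - b := by field_simp
    rw [this]
    calc ‖x‖ - b ≤ a - b := by linarith
      _ ≤ |a - b| := le_abs_self _
  unfold pb
  by_cases hx : ‖x‖ ≤ r <;> by_cases hy : ‖x‖ ≤ s
  · simp [hx, hy]
  · have := key r s hr hs hx hy
    unfold pb at this
    simpa [hx, hy] using this
  · have := key s r hs hr hy hx
    unfold pb at this
    rw [norm_sub_rev]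
    rw [abs_sub_comm]
    simpa [hx, hy] using this
  · rw [if_neg hx, if_neg hy]
    push_neg at hx
    have hxp : (0:ℝ) < ‖x‖ := lt_of_le_of_lt hr hx
    rw [← sub_smul, norm_smul, Real.norm_eq_abs]
    have : r / ‖x‖ - s / ‖x‖ = (r - s) / ‖x‖ := by ring
    rw [this, abs_div, abs_of_pos hxp, div_mul_cancel₀]
    exact hxp.ne'

/-- **Lemma 2.** The strict operator (clamp the normal component at `0`, then project the
tangential component onto the disc of radius `μ` times the clamped normal component) is
Lipschitz continuous with constant `1 + μ` for the Euclidean norm on `ℝ × ℝ² ≅ ℝ³`. -/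
theorem strict_operator_lipschitz (μ : ℝ) (hμ : 0 < μ)
    (p : ℝ → EuclideanSpace ℝ (Fin 2) → EuclideanSpace ℝ (Fin 2))
    (hp : ∀ r x, p r x = if ‖x‖ ≤ r then x else (r / ‖x‖) • x)
    (T : ℝ × EuclideanSpace ℝ (Fin 2) → ℝ × EuclideanSpace ℝ (Fin 2))
    (hT : ∀ xn xt, T (xn, xt) = (max xn 0, p (μ * max xn 0) xt)) :
    ∀ x y : ℝ × EuclideanSpace ℝ (Fin 2),
      Real.sqrt (((T x).1 - (T y).1) ^ 2 + ‖(T x).2 - (T y).2‖ ^ 2) ≤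
        (1 + μ) * Real.sqrt ((x.1 - y.1) ^ 2 + ‖x.2 - y.2‖ ^ 2) := by
  intro x y
  obtain ⟨xn, xt⟩ := x
  obtain ⟨yn, yt⟩ := y
  have hpeq : ∀ r z, p r z = pb r z := fun r z => by rw [hp]; rfl
  rw [hT, hT]
  simp only
  set a : ℝ := |xn - yn| with ha
  set b : ℝ := ‖xt - yt‖ with hb
  have hc : |max xn 0 - max yn 0| ≤ a := by
    rw [ha]
    rcases le_total xn 0 with h1 | h1 <;> rcases le_total yn 0 with h2 | h2 <;>
      simp [max_eq_left, max_eq_right, h1, h2, abs_le] <;>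
      constructor <;> cases abs_le.mp (le_refl |xn - yn|) <;> nlinarith [abs_nonneg (xn - yn), le_abs_self (xn - yn), neg_abs_le (xn - yn)]
  have hd : ‖p (μ * max xn 0) xt - p (μ * max yn 0) yt‖ ≤ μ * a + b := by
    rw [hpeq, hpeq]
    have hr : 0 ≤ μ * max xn 0 := mul_nonneg hμ.le (le_max_right _ _)
    have hs : 0 ≤ μ * max yn 0 := mul_nonneg hμ.le (le_max_right _ _)
    calc ‖pb (μ * max xn 0) xt - pb (μ * max yn 0) yt‖
        ≤ ‖pb (μ * max xn 0) xt - pb (μ * max yn 0) xt‖ +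
          ‖pb (μ * max yn 0) xt - pb (μ * max yn 0) yt‖ := by
          have := norm_sub_le_norm_sub_add_norm_sub (pb (μ * max xn 0) xt)
            (pb (μ * max yn 0) xt) (pb (μ * max yn 0) yt)
          exact this
      _ ≤ |μ * max xn 0 - μ * max yn 0| + b := by
          gcongr
          · exact pb_radius_lip _ _ hr hs xt
          · exact pb_point_lip _ hs xt yt
      _ ≤ μ * a + b := by
          have : |μ * max xn 0 - μ * max yn 0| = μ * |max xn 0 - max yn 0| := by
            rw [← mul_sub, abs_mul, abs_of_pos hμ]
          rw [this]
          have := mul_le_mul_of_nonneg_left hc hμ.le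
          linarith
  have ha0 : (0:ℝ) ≤ a := abs_nonneg _
  have hb0 : (0:ℝ) ≤ b := norm_nonneg _
  have hd0 : (0:ℝ) ≤ ‖p (μ * max xn 0) xt - p (μ * max yn 0) yt‖ := norm_nonneg _
  have key : (max xn 0 - max yn 0) ^ 2 + ‖p (μ * max xn 0) xt - p (μ * max yn 0) yt‖ ^ 2
      ≤ (1 + μ) ^ 2 * (a ^ 2 + b ^ 2) := by
    have h1 : (max xn 0 - max yn 0) ^ 2 ≤ a ^ 2 := by
      nlinarith [sq_abs (max xn 0 - max yn 0), abs_nonneg (max xn 0 - max yn 0)]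
    have h2 : ‖p (μ * max xn 0) xt - p (μ * max yn 0) yt‖ ^ 2 ≤ (μ * a + b) ^ 2 := by
      nlinarith
    nlinarith [sq_nonneg (a - b), mul_nonneg (mul_nonneg hμ.le ha0) hb0,
      mul_nonneg hμ.le (sq_nonneg b)]
  have habs : (xn - yn) ^ 2 = a ^ 2 := (sq_abs _).symm
  rw [habs]
  calc Real.sqrt ((max xn 0 - max yn 0) ^ 2 + ‖p (μ * max xn 0) xt - p (μ * max yn 0) yt‖ ^ 2)
      ≤ Real.sqrt ((1 + μ) ^ 2 * (a ^ 2 + b ^ 2)) := Real.sqrt_le_sqrt key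
    _ = (1 + μ) * Real.sqrt (a ^ 2 + b ^ 2) := by
        rw [Real.sqrt_mul (sq_nonneg _), Real.sqrt_sq (by linarith)]
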